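/- arXiv:2203.15994 — 2 statements merged into one kernel-verified Lean document; each statement's English description precedes it below -/
import Mathlib

section
/- Suppose K_w is nonempty and R(K_w) > 0. Then the piecewise-linear interpolant of the data satisfies the strict inequality ‖S_w′‖_{L_p[0,1]} < 1, where S_w′ is the a.e. derivative of S_w; in particular Λ := 1 − ‖S_w′‖_{L_p[0,1]} > 0. -/
open MeasureTheory Set ENNReal

lemma strictConvexOn_abs_rpow {p : ℝ} (hp : 1 < p) :
    StrictConvexOn ℝ univ (fun t : ℝ => |t| ^ p) := by
  have hp0 : (0:ℝ) < p := lt_trans one_pos hp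
  refine ⟨convex_univ, ?_⟩
  intro x _ y _ hxy a b ha hb hab
  simp only [smul_eq_mul]
  have habs : |a * x + b * y| ≤ a * |x| + b * |y| := by
    calc |a * x + b * y| ≤ |a * x| + |b * y| := abs_add_le _ _
    _ = a * |x| + b * |y| := by rw [abs_mul, abs_mul, abs_of_pos ha, abs_of_pos hb]
  by_cases hxa : |x| = |y|
  · have hxny : x = -y := by
      rcases abs_eq_abs.1 hxa with h | h
      · exact absurd h hxy
      · exact h
    have hy0 : y ≠ 0 := by
      rintro rfl
      simp at hxny
      exact hxy (by simp [hxny])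
    have hlt : |a * x + b * y| < |y| := by
      have : a * x + b * y = (b - a) * y := by rw [hxny]; ring
      rw [this, abs_mul]
      have h1 : |b - a| < 1 := abs_lt.2 ⟨by linarith, by linarith⟩
      have h2 : 0 < |y| := abs_pos.2 hy0
      nlinarith
    have : |a * x + b * y| ^ p < |y| ^ p :=
      Real.rpow_lt_rpow (abs_nonneg _) hlt hp0
    calc |a * x + b * y| ^ p < |y| ^ p := this
      _ = a * |x| ^ p + b * |y| ^ p := by rw [hxa]; nlinarith [Real.rpow_nonneg (abs_nonneg y) p]
  · have h1 : |a * x + b * y| ^ p ≤ (a * |x| + b * |y|) ^ p :=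
      Real.rpow_le_rpow (abs_nonneg _) habs hp0.le
    have h2 : (a * |x| + b * |y|) ^ p < a * |x| ^ p + b * |y| ^ p := by
      have := (strictConvexOn_rpow hp).2 (mem_Ici.2 (abs_nonneg x)) (mem_Ici.2 (abs_nonneg y))
        hxa ha hb hab
      simpa [smul_eq_mul] using this
    exact h1.trans_lt h2

lemma covering_lemma {n : ℕ} (hn : 0 < n) (x : Fin (n + 1) → ℝ) (hmono : StrictMono x)
    {t : ℝ} (ht : t ∈ Icc (x 0) (x (Fin.last n))) :
    ∃ j : Fin n, t ∈ Icc (x j.castSucc) (x j.succ) := by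
  classical
  set S : Finset (Fin (n + 1)) := Finset.univ.filter (fun j => x j ≤ t) with hS
  have h0 : (0 : Fin (n + 1)) ∈ S := by simp [hS, ht.1]
  set j := S.max' ⟨0, h0⟩ with hj
  have hjmem : j ∈ S := S.max'_mem _
  have hjle : x j ≤ t := (Finset.mem_filter.1 hjmem).2
  by_cases hjn : (j : ℕ) < n
  · refine ⟨⟨(j : ℕ), hjn⟩, ?_, ?_⟩
    · have : (⟨(j : ℕ), hjn⟩ : Fin n).castSucc = j := by ext; simp
      rw [this]; exact hjle
    · by_contra hlt
      push_neg at hlt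
      have hmem : (⟨(j : ℕ), hjn⟩ : Fin n).succ ∈ S := by
        simp only [hS, Finset.mem_filter, Finset.mem_univ, true_and]
        exact hlt.le
      have := S.le_max' _ hmem
      rw [← hj] at this
      have hlt2 : j < (⟨(j : ℕ), hjn⟩ : Fin n).succ := by
        rw [Fin.lt_def]; simp
      exact absurd this (not_le.2 hlt2)
  · have hjl : j = Fin.last n := by
      ext
      have := j.isLt
      simp [Fin.last]
      omega
    have ht2 : t = x (Fin.last n) := le_antisymm ht.2 (by rw [← hjl]; exact hjle)
    refine ⟨⟨n - 1, by omega⟩, ?_, ?_⟩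
    · refine le_of_le_of_eq ?_ ht2.symm
      apply hmono.monotone
      rw [Fin.le_def]
      simp only [Fin.castSucc_mk, Fin.val_last]
      omega
    · have : (⟨n - 1, by omega⟩ : Fin n).succ = Fin.last n := by
        ext; simp [Fin.last]; omega
      rw [this, ht2]

lemma eLpNorm_ofReal_eq {p : ℝ} (hp : 0 < p) (f : ℝ → ℝ) (μ : Measure ℝ) :
    eLpNorm f (ENNReal.ofReal p) μ
      = (∫⁻ t, ENNReal.ofReal (|f t| ^ p) ∂μ) ^ (1 / p) := by
  rw [eLpNorm_eq_lintegral_rpow_enorm_toReal (by simp [hp]) ofReal_ne_top,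
    ENNReal.toReal_ofReal hp.le]
  congr 1
  apply lintegral_congr
  intro t
  rw [← ofReal_norm, Real.norm_eq_abs,
    ENNReal.ofReal_rpow_of_nonneg (abs_nonneg _) hp.le]

/-- The model class: absolutely continuous `f : [0,1] → ℝ` with `‖f'‖_{L_p[0,1]} ≤ 1`. -/
def modelK (p : ℝ) : Set (ℝ → ℝ) :=
  {f | ∃ f' : ℝ → ℝ, IntegrableOn f' (Icc 0 1) ∧
    (∀ t ∈ Icc (0 : ℝ) 1, f t = f 0 + ∫ u in (0 : ℝ)..t, f' u) ∧
    eLpNorm f' (ENNReal.ofReal p) (volume.restrict (Icc 0 1)) ≤ 1}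

/-- Chebyshev radius in `L₂[0,1]`: `R(S) = inf_z sup_{f ∈ S} ‖f − z‖_{L₂[0,1]}`. -/
noncomputable def L2cheb (S : Set (ℝ → ℝ)) : ℝ≥0∞ :=
  ⨅ z : ℝ → ℝ, ⨆ f ∈ S, eLpNorm (fun t => f t - z t) 2 (volume.restrict (Icc 0 1))

/-- If `K_w ≠ ∅` and `R(K_w) > 0`, the derivative `S_w'` of the piecewise-linear
interpolant of the data satisfies the strict inequality `‖S_w'‖_{L_p[0,1]} < 1`;
in particular `Λ := 1 − ‖S_w'‖_{L_p[0,1]} > 0`. -/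
theorem stmt_16
    (p : ℝ) (hp1 : 1 < p) (hp2 : p ≤ 2)
    {n : ℕ} (hn : 0 < n) (x : Fin (n + 1) → ℝ)
    (hmono : StrictMono x) (hx0 : x 0 = 0) (hx1 : x (Fin.last n) = 1)
    (w : Fin (n + 1) → ℝ)
    (hne : ({f ∈ modelK p | ∀ j, f (x j) = w j}).Nonempty)
    (hR : 0 < L2cheb {f ∈ modelK p | ∀ j, f (x j) = w j})
    (Sw' : ℝ → ℝ)
    (hSw' : ∀ j : Fin n, ∀ t ∈ Ioo (x j.castSucc) (x j.succ),
      Sw' t = (w j.succ - w j.castSucc) / (x j.succ - x j.castSucc)) :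
    eLpNorm Sw' (ENNReal.ofReal p) (volume.restrict (Icc 0 1)) < 1 ∧
    0 < 1 - (eLpNorm Sw' (ENNReal.ofReal p) (volume.restrict (Icc 0 1))).toReal := by
  classical
  have hp0 : (0:ℝ) < p := by linarith
  set p' := ENNReal.ofReal p with hp'
  set φ : ℝ → ℝ := fun t => |t| ^ p with hφ
  have hφc : Continuous φ := continuous_abs.rpow_const (fun x => Or.inr hp0.le)
  have hφsc : StrictConvexOn ℝ univ φ := strictConvexOn_abs_rpow hp1
  have hφ0 : ∀ t, 0 ≤ φ t := fun t => Real.rpow_nonneg (abs_nonneg _) p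
  set S : Set (ℝ → ℝ) := {f ∈ modelK p | ∀ j, f (x j) = w j} with hSdef
  set Δ : Fin n → ℝ := fun j => x j.succ - x j.castSucc with hΔdef
  have hΔ : ∀ j, 0 < Δ j := fun j => sub_pos.2 (hmono (Fin.castSucc_lt_succ (i := j)))
  set c : Fin n → ℝ := fun j => (w j.succ - w j.castSucc) / Δ j with hcdef
  set E : ℝ := ∑ j, φ (c j) * Δ j with hEdef
  have hmem : ∀ j : Fin (n+1), x j ∈ Icc (0:ℝ) 1 := fun j =>
    ⟨hx0 ▸ hmono.monotone (Fin.zero_le j), hx1 ▸ hmono.monotone (Fin.le_last j)⟩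
  have hsub : ∀ j : Fin n, Ioc (x j.castSucc) (x j.succ) ⊆ Icc (0:ℝ) 1 := by
    intro j u hu
    exact ⟨le_trans (hmem j.castSucc).1 hu.1.le, le_trans hu.2 (hmem j.succ).2⟩
  have hres_null : ∀ (A B : Set ℝ), volume B = 0 → ∀ᵐ t ∂(volume.restrict A), t ∉ B := by
    intro A B hB
    apply measure_eq_zero_iff_ae_notMem.1
    exact le_antisymm (le_trans (Measure.le_iff'.1 Measure.restrict_le_self B) hB.le) zero_le
  -- the splitting of [0,1] into subintervals
  set a : ℕ → ℝ := fun i => x ⟨min i n, Nat.lt_succ_of_le (min_le_right _ _)⟩ with hadef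
  have ha0 : a 0 = 0 := by
    rw [hadef, ← hx0]
    apply congrArg
    apply Fin.ext
    simp
  have han : a n = 1 := by
    rw [hadef, ← hx1]
    apply congrArg
    apply Fin.ext
    simp [Fin.last]
  have hak : ∀ k : Fin n, a (k : ℕ) = x k.castSucc ∧ a ((k : ℕ) + 1) = x k.succ := by
    intro k
    have hk := k.isLt
    constructor
    · rw [hadef]
      apply congrArg
      apply Fin.ext
      simp only [Fin.coe_castSucc]
      omega
    · rw [hadef]
      apply congrArg
      apply Fin.ext
      simp only [Fin.val_succ]
      omega
  have split : ∀ ψ : ℝ → ℝ,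
      (∀ k : Fin n, IntegrableOn ψ (Ioc (x k.castSucc) (x k.succ))) →
      ∫ t in Icc (0:ℝ) 1, ψ t = ∑ j : Fin n, ∫ t in Ioc (x j.castSucc) (x j.succ), ψ t := by
    intro ψ hint
    have hii : ∀ k < n, IntervalIntegrable ψ volume (a k) (a (k+1)) := by
      intro k hk
      have h1 := (hak ⟨k, hk⟩).1
      have h2 := (hak ⟨k, hk⟩).2
      simp only [Fin.val_mk] at h1 h2
      rw [intervalIntegrable_iff, uIoc_of_le
        (by rw [h1, h2]; exact (hmono Fin.castSucc_lt_succ).le), h1, h2]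
      exact hint _
    have hsum := intervalIntegral.sum_integral_adjacent_intervals hii
    rw [integral_Icc_eq_integral_Ioc,
      ← intervalIntegral.integral_of_le (by norm_num : (0:ℝ) ≤ 1)]
    rw [show (0:ℝ) = a 0 from ha0.symm, show (1:ℝ) = a n from han.symm, ← hsum,
      ← Fin.sum_univ_eq_sum_range (fun k => ∫ t in a k..a (k+1), ψ t) n]
    apply Finset.sum_congr rfl
    intro j _
    rw [(hak j).1, (hak j).2]
    exact intervalIntegral.integral_of_le (hmono Fin.castSucc_lt_succ).le
  -- master facts for each f in S
  have master : ∀ f ∈ S, ∃ g : ℝ → ℝ,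
      (∀ s t : ℝ, s ∈ Icc (0:ℝ) 1 → t ∈ Icc (0:ℝ) 1 → s ≤ t →
        f t - f s = ∫ u in Ioc s t, g u) ∧
      (∀ j : Fin n, φ (c j) * Δ j ≤ ∫ t in Ioc (x j.castSucc) (x j.succ), φ (g t)) ∧
      (∀ j : Fin n,
        ¬ (g =ᵐ[volume.restrict (Ioc (x j.castSucc) (x j.succ))] fun _ => c j) →
        φ (c j) * Δ j < ∫ t in Ioc (x j.castSucc) (x j.succ), φ (g t)) ∧
      (∑ j : Fin n, ∫ t in Ioc (x j.castSucc) (x j.succ), φ (g t)) ≤ 1 := by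
    intro f hf
    obtain ⟨g, hgint, hrep, hgnorm⟩ := hf.1
    have hii0 : ∀ t ∈ Icc (0:ℝ) 1, IntervalIntegrable g volume 0 t := by
      intro t ht
      rw [intervalIntegrable_iff, uIoc_of_le ht.1]
      exact hgint.mono_set (fun u hu => ⟨hu.1.le, hu.2.trans ht.2⟩)
    have hdiff : ∀ s t : ℝ, s ∈ Icc (0:ℝ) 1 → t ∈ Icc (0:ℝ) 1 → s ≤ t →
        f t - f s = ∫ u in Ioc s t, g u := by
      intro s t hs ht hst
      rw [hrep t ht, hrep s hs]
      have h := intervalIntegral.integral_interval_sub_left (hii0 t ht) (hii0 s hs)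
      rw [← intervalIntegral.integral_of_le hst, ← h]
      ring
    -- the norm bound as a real integral
    have hgm : AEStronglyMeasurable g (volume.restrict (Icc (0:ℝ) 1)) :=
      hgint.aestronglyMeasurable
    have hlint : ∫⁻ t in Icc (0:ℝ) 1, ENNReal.ofReal (φ (g t)) ≤ 1 := by
      have h1 := hgnorm
      rw [eLpNorm_ofReal_eq hp0] at h1
      have h2 : ((∫⁻ t in Icc (0:ℝ) 1, ENNReal.ofReal (|g t| ^ p)) ^ (1/p)) ^ p ≤ 1 ^ p :=
        ENNReal.rpow_le_rpow h1 hp0.le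
      rwa [← ENNReal.rpow_mul, one_div_mul_cancel hp0.ne', ENNReal.rpow_one,
        ENNReal.one_rpow] at h2
    have hφgint : IntegrableOn (fun t => φ (g t)) (Icc (0:ℝ) 1) := by
      constructor
      · exact hφc.comp_aestronglyMeasurable hgm
      · rw [hasFiniteIntegral_iff_norm]
        have : ∀ t, ENNReal.ofReal ‖φ (g t)‖ = ENNReal.ofReal (φ (g t)) := by
          intro t; rw [Real.norm_eq_abs, abs_of_nonneg (hφ0 _)]
        calc ∫⁻ t in Icc (0:ℝ) 1, ENNReal.ofReal ‖φ (g t)‖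
            = ∫⁻ t in Icc (0:ℝ) 1, ENNReal.ofReal (φ (g t)) := by
              exact lintegral_congr fun t => this t
          _ ≤ 1 := hlint
          _ < ⊤ := one_lt_top
    have hφgle : ∫ t in Icc (0:ℝ) 1, φ (g t) ≤ 1 := by
      have h := ofReal_integral_eq_lintegral_ofReal hφgint
        (Filter.Eventually.of_forall fun t => hφ0 _)
      have h2 : ENNReal.ofReal (∫ t in Icc (0:ℝ) 1, φ (g t)) ≤ ENNReal.ofReal 1 := by
        rw [h, ofReal_one]; exact hlint
      exact (ENNReal.ofReal_le_ofReal_iff one_pos.le).1 h2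
    -- per-interval Jensen
    have hjensen : ∀ j : Fin n,
        (φ (c j) * Δ j ≤ ∫ t in Ioc (x j.castSucc) (x j.succ), φ (g t)) ∧
        (¬ (g =ᵐ[volume.restrict (Ioc (x j.castSucc) (x j.succ))] fun _ => c j) →
          φ (c j) * Δ j < ∫ t in Ioc (x j.castSucc) (x j.succ), φ (g t)) := by
      intro j
      set I : Set ℝ := Ioc (x j.castSucc) (x j.succ) with hIdef
      set μj := volume.restrict I with hμj
      have hμuniv : μj univ = ENNReal.ofReal (Δ j) := by
        rw [hμj, Measure.restrict_apply_univ, hIdef, Real.volume_Ioc]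
      haveI : IsFiniteMeasure μj := ⟨by rw [hμuniv]; exact ofReal_lt_top⟩
      haveI : NeZero μj := ⟨by
        intro h
        have := hμuniv
        rw [h] at this
        simp only [Measure.coe_zero, Pi.zero_apply] at this
        rw [eq_comm, ofReal_eq_zero] at this
        exact absurd this (not_le.2 (hΔ j))⟩
      have hgI : Integrable g μj := hgint.mono_set (hsub j)
      have hφgI : Integrable (fun t => φ (g t)) μj := hφgint.mono_set (hsub j)
      have hintg : ∫ t, g t ∂μj = w j.succ - w j.castSucc := by
        have := hdiff (x j.castSucc) (x j.succ) (hmem _) (hmem _)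
          (hmono (Fin.castSucc_lt_succ (i := j))).le
        rw [hf.2 j.succ, hf.2 j.castSucc] at this
        exact this.symm
      have havg : ⨍ t, g t ∂μj = c j := by
        rw [average_eq, measureReal_def, hμuniv, toReal_ofReal (hΔ j).le, hintg, smul_eq_mul]
        simp only [hcdef]
        rw [div_eq_inv_mul]
      have havgφ : ⨍ t, φ (g t) ∂μj
          = (Δ j)⁻¹ * ∫ t in I, φ (g t) := by
        rw [average_eq, measureReal_def, hμuniv, toReal_ofReal (hΔ j).le, smul_eq_mul]
      constructor
      · have h := hφsc.convexOn.map_average_le hφc.continuousOn isClosed_univ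
          (Filter.Eventually.of_forall fun _ => mem_univ _) hgI hφgI
        rw [havg, havgφ] at h
        have hΔj := hΔ j
        calc φ (c j) * Δ j ≤ ((Δ j)⁻¹ * ∫ t in I, φ (g t)) * Δ j := by
              exact mul_le_mul_of_nonneg_right h hΔj.le
          _ = ∫ t in I, φ (g t) := by field_simp
      · intro hne'
        have h := hφsc.ae_eq_const_or_map_average_lt hφc.continuousOn isClosed_univ
          (Filter.Eventually.of_forall fun _ => mem_univ _) hgI hφgI
        rcases h with h | h
        · exfalso
          apply hne'
          rw [havg] at h
          exact h
        · rw [havg, havgφ] at h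
          have hΔj := hΔ j
          calc φ (c j) * Δ j < ((Δ j)⁻¹ * ∫ t in I, φ (g t)) * Δ j := by
                exact mul_lt_mul_of_pos_right h hΔj
            _ = ∫ t in I, φ (g t) := by field_simp
    refine ⟨g, hdiff, fun j => (hjensen j).1, fun j => (hjensen j).2, ?_⟩
    rw [← split (fun t => φ (g t)) (fun k => hφgint.mono_set (hsub k))]
    exact hφgle
  -- E ≤ 1 from nonemptiness
  obtain ⟨f₀, hf₀⟩ := hne
  obtain ⟨g₀, hrep₀, hle₀, hstrict₀, hsum₀⟩ := master f₀ hf₀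
  have hE1 : E ≤ 1 := le_trans (Finset.sum_le_sum (fun j _ => hle₀ j)) hsum₀
  -- Step C : computation of the eLpNorm of Sw'
  set T : ℝ → ℝ :=
    fun t => ∑ j : Fin n, (Ioo (x j.castSucc) (x j.succ)).indicator (fun _ => c j) t with hTdef
  have hTval : ∀ (j : Fin n), ∀ t ∈ Ioo (x j.castSucc) (x j.succ), T t = c j := by
    intro j t htj
    simp only [hTdef]
    rw [Finset.sum_eq_single j]
    · exact indicator_of_mem htj _
    · intro k _ hkj
      apply indicator_of_notMem
      intro hk
      rcases lt_or_gt_of_ne (Fin.val_ne_of_ne hkj) with h | h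
      · have hle : x k.succ ≤ x j.castSucc :=
          hmono.monotone (by rw [Fin.le_def]; simp only [Fin.val_succ, Fin.coe_castSucc]; omega)
        exact absurd htj.1 (not_lt.2 (hk.2.le.trans hle))
      · have hle : x j.succ ≤ x k.castSucc :=
          hmono.monotone (by rw [Fin.le_def]; simp only [Fin.val_succ, Fin.coe_castSucc]; omega)
        exact absurd hk.1 (not_lt.2 (le_trans htj.2.le hle))
    · intro h
      exact absurd (Finset.mem_univ j) h
  have haeT : Sw' =ᵐ[volume.restrict (Icc (0:ℝ) 1)] T := by
    have h1 : ∀ᵐ t ∂(volume.restrict (Icc (0:ℝ) 1)), t ∉ Set.range x :=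
      hres_null _ _ ((Set.finite_range x).measure_zero _)
    have h2 : ∀ᵐ t ∂(volume.restrict (Icc (0:ℝ) 1)), t ∈ Icc (0:ℝ) 1 :=
      Filter.eventually_of_mem (self_mem_ae_restrict measurableSet_Icc) (fun _ h => h)
    filter_upwards [h1, h2] with t hnr htIcc
    obtain ⟨j, hj⟩ := covering_lemma hn x hmono (by rwa [hx0, hx1])
    have hjo : t ∈ Ioo (x j.castSucc) (x j.succ) := by
      constructor
      · rcases lt_or_eq_of_le hj.1 with h | h
        · exact h
        · exact absurd ⟨_, h⟩ hnr
      · rcases lt_or_eq_of_le hj.2 with h | h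
        · exact h
        · exact absurd ⟨_, h.symm⟩ hnr
    rw [hSw' j t hjo, hTval j t hjo]
  have hTm : Measurable T := by
    rw [hTdef]
    exact Finset.measurable_sum _ (fun j _ => measurable_const.indicator measurableSet_Ioo)
  have hbound : ∀ t, φ (T t) ≤ ∑ j : Fin n, φ (c j) := by
    intro t
    by_cases hex : ∃ j : Fin n, t ∈ Ioo (x j.castSucc) (x j.succ)
    · obtain ⟨j, hj⟩ := hex
      rw [hTval j t hj]
      exact Finset.single_le_sum (fun k _ => hφ0 _) (Finset.mem_univ j)
    · push_neg at hex
      have hT0 : T t = 0 := by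
        simp only [hTdef]
        exact Finset.sum_eq_zero fun k _ => indicator_of_notMem (hex k) _
      rw [hT0]
      have : φ 0 = 0 := by
        simp only [hφ, abs_zero]
        exact Real.zero_rpow hp0.ne'
      rw [this]
      exact Finset.sum_nonneg fun k _ => hφ0 _
  haveI : IsFiniteMeasure (volume.restrict (Icc (0:ℝ) 1)) :=
    ⟨by rw [Measure.restrict_apply_univ]; exact measure_Icc_lt_top⟩
  have hTint : IntegrableOn (fun t => φ (T t)) (Icc (0:ℝ) 1) := by
    constructor
    · exact ((hφc.measurable).comp hTm).aestronglyMeasurable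
    · exact HasFiniteIntegral.of_bounded (C := ∑ j : Fin n, φ (c j))
        (Filter.Eventually.of_forall fun t => by
          rw [Real.norm_eq_abs, abs_of_nonneg (hφ0 _)]; exact hbound t)
  have hTsum : ∫ t in Icc (0:ℝ) 1, φ (T t) = E := by
    rw [split (fun t => φ (T t)) (fun k => hTint.mono_set (hsub k)), hEdef]
    apply Finset.sum_congr rfl
    intro j _
    have hae : ∀ᵐ t ∂(volume.restrict (Ioc (x j.castSucc) (x j.succ))),
        φ (T t) = φ (c j) := by
      have h1 : ∀ᵐ t ∂(volume.restrict (Ioc (x j.castSucc) (x j.succ))),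
          t ∉ ({x j.succ} : Set ℝ) :=
        hres_null _ _ (measure_singleton _)
      have h2 : ∀ᵐ t ∂(volume.restrict (Ioc (x j.castSucc) (x j.succ))),
          t ∈ Ioc (x j.castSucc) (x j.succ) :=
        Filter.eventually_of_mem (self_mem_ae_restrict measurableSet_Ioc) (fun _ h => h)
      filter_upwards [h1, h2] with t hns ht
      have : t ∈ Ioo (x j.castSucc) (x j.succ) :=
        ⟨ht.1, lt_of_le_of_ne ht.2 (fun h => hns (by simp [h]))⟩
      rw [hTval j t this]
    rw [integral_congr_ae hae, setIntegral_const, measureReal_def, Real.volume_Ioc,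
      toReal_ofReal (hΔ j).le, smul_eq_mul, mul_comm]
  have hT : eLpNorm Sw' p' (volume.restrict (Icc (0:ℝ) 1)) = (ENNReal.ofReal E) ^ (1/p) := by
    rw [eLpNorm_congr_ae haeT, hp', eLpNorm_ofReal_eq hp0]
    congr 1
    rw [← ofReal_integral_eq_lintegral_ofReal hTint
      (Filter.Eventually.of_forall fun t => hφ0 _), hTsum]
  -- Step D : case analysis
  rcases lt_or_eq_of_le hE1 with hElt | hEeq
  · have hlt : eLpNorm Sw' p' (volume.restrict (Icc (0:ℝ) 1)) < 1 := by
      rw [hT]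
      calc (ENNReal.ofReal E) ^ (1/p) < 1 ^ (1/p) := by
            rw [ENNReal.rpow_lt_rpow_iff (by positivity : (0:ℝ) < 1/p)]
            exact ofReal_lt_one.2 hElt
        _ = 1 := ENNReal.one_rpow _
    refine ⟨hlt, ?_⟩
    have hne_top : eLpNorm Sw' p' (volume.restrict (Icc (0:ℝ) 1)) ≠ ⊤ :=
      (hlt.trans one_lt_top).ne
    have h2 : (eLpNorm Sw' p' (volume.restrict (Icc (0:ℝ) 1))).toReal < 1 := by
      rw [← ENNReal.toReal_one]
      exact (ENNReal.toReal_lt_toReal hne_top one_ne_top).2 hlt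
    linarith
  · exfalso
    -- every f in S is determined on [0,1]
    have hall : ∀ f ∈ S, ∀ t ∈ Icc (0:ℝ) 1, ∀ j : Fin n,
        t ∈ Icc (x j.castSucc) (x j.succ) →
        f t = w j.castSucc + c j * (t - x j.castSucc) := by
      intro f hf t ht j hj
      obtain ⟨g, hrep, hle, hstrict, hsum⟩ := master f hf
      have haej : ∀ k : Fin n,
          g =ᵐ[volume.restrict (Ioc (x k.castSucc) (x k.succ))] fun _ => c k := by
        intro k
        by_contra hk
        have h1 : E < ∑ i : Fin n, ∫ t in Ioc (x i.castSucc) (x i.succ), φ (g t) := by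
          rw [hEdef]
          exact Finset.sum_lt_sum (fun i _ => hle i) ⟨k, Finset.mem_univ k, hstrict k hk⟩
        rw [← hEeq] at hsum
        linarith
      have h2 := hrep (x j.castSucc) t (hmem j.castSucc) ht hj.1
      have hg_eq : ∫ u in Ioc (x j.castSucc) t, g u = c j * (t - x j.castSucc) := by
        have hae2 : g =ᵐ[volume.restrict (Ioc (x j.castSucc) t)] fun _ => c j :=
          ae_restrict_of_ae_restrict_of_subset (Ioc_subset_Ioc_right hj.2) (haej j)
        rw [integral_congr_ae hae2, setIntegral_const, measureReal_def, Real.volume_Ioc,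
          toReal_ofReal (sub_nonneg.2 hj.1), smul_eq_mul, mul_comm]
      have hfx : f (x j.castSucc) = w j.castSucc := hf.2 j.castSucc
      rw [hfx] at h2
      rw [hg_eq] at h2
      linarith
    have hagree : ∀ f ∈ S, ∀ t ∈ Icc (0:ℝ) 1, f t = f₀ t := by
      intro f hf t ht
      obtain ⟨j, hj⟩ := covering_lemma hn x hmono (by rwa [hx0, hx1])
      rw [hall f hf t ht j hj, hall f₀ hf₀ t ht j hj]
    have hchebzero : L2cheb S ≤ 0 := by
      refine le_trans (iInf_le _ f₀) ?_
      refine iSup₂_le fun f hf => ?_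
      have hfeq : (fun t => f t - f₀ t) =ᵐ[volume.restrict (Icc (0:ℝ) 1)] 0 := by
        have h2 : ∀ᵐ t ∂(volume.restrict (Icc (0:ℝ) 1)), t ∈ Icc (0:ℝ) 1 :=
          Filter.eventually_of_mem (self_mem_ae_restrict measurableSet_Icc) (fun _ h => h)
        filter_upwards [h2] with t ht
        simp [hagree f hf t ht]
      rw [eLpNorm_congr_ae hfeq, eLpNorm_zero]
    exact absurd hR (not_lt.2 hchebzero)
end

section
/- For every ε > 0 with K(w,ε) nonempty, the Chebyshev radius of the inflated set in L₂[0,1] satisfies R(K(w,ε)) ≤ h(x)^s + ε·√(m·h(x)). (Indeed, every f ∈ K(w,ε) satisfies ‖f − S_w‖_{L₂[0,1]} ≤ h(x)^s + ε√(m h(x)).) -/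
open MeasureTheory Set ENNReal

section helpers

lemma sq_enorm_eq (r : ℝ) : (‖r‖₊ : ℝ≥0∞) ^ (2:ℝ) = ENNReal.ofReal (r^2) := by
  rw [← enorm_eq_nnnorm, Real.enorm_eq_ofReal_abs, ENNReal.ofReal_rpow_of_nonneg (abs_nonneg r) (by norm_num : (0:ℝ) ≤ 2),
    show |r| ^ (2:ℝ) = |r|^(2:ℕ) from Real.rpow_natCast _ 2, sq_abs]

lemma conv_sq (a b θ : ℝ) (h0 : 0 ≤ θ) (h1 : θ ≤ 1) :
    ((1-θ)*a + θ*b)^2 ≤ (1-θ)*a^2 + θ*b^2 := by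
  nlinarith [sq_nonneg (a-b), mul_nonneg h0 (sub_nonneg.2 h1)]

lemma sum_ind {n : ℕ} (A : Fin n → Set ℝ) (hdisj : Pairwise (Function.onFun Disjoint A))
    (g : Fin n → ℝ → ℝ) (j : Fin n) (t : ℝ) (ht : t ∈ A j) :
    ∑ i, (A i).indicator (g i) t = g j t := by
  rw [Finset.sum_eq_single_of_mem j (Finset.mem_univ j)]
  · exact Set.indicator_of_mem ht _
  · intro i _ hij
    exact Set.indicator_of_notMem (fun h => Set.disjoint_left.1 (hdisj hij) h ht) _

lemma part_disj {n : ℕ} (x : Fin (n+1) → ℝ) (hmono : StrictMono x) :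
    Pairwise (Function.onFun Disjoint (fun j : Fin n => Ico (x j.castSucc) (x j.succ))) := by
  have key : ∀ i j : Fin n, i < j →
      Disjoint (Ico (x i.castSucc) (x i.succ)) (Ico (x j.castSucc) (x j.succ)) := by
    intro i j h
    have hle : x i.succ ≤ x j.castSucc := hmono.monotone (by
      rw [Fin.le_def]
      simp only [Fin.val_succ, Fin.coe_castSucc]
      exact h)
    refine Set.disjoint_left.2 fun t hti htj => ?_
    exact absurd (lt_of_lt_of_le hti.2 (hle.trans htj.1)) (lt_irrefl t)
  intro i j hij
  rcases hij.lt_or_gt with h | h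
  · exact key i j h
  · exact (key j i h).symm

lemma part_exists {n : ℕ} (x : Fin (n+1) → ℝ) (hmono : StrictMono x)
    (t : ℝ) (h0 : x 0 ≤ t) (h1 : t < x (Fin.last n)) :
    ∃ j : Fin n, t ∈ Ico (x j.castSucc) (x j.succ) := by
  classical
  set s : Finset (Fin (n+1)) := Finset.univ.filter (fun i => x i ≤ t) with hs
  have hne : s.Nonempty := ⟨0, by simp [hs, h0]⟩
  have hkt : x (s.max' hne) ≤ t := by have := s.max'_mem hne; simpa [hs] using this
  have hkn : ((s.max' hne : Fin (n+1)) : ℕ) < n := by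
    by_contra h
    have hlast : s.max' hne = Fin.last n := by
      have := (s.max' hne).isLt
      apply Fin.ext; simp only [Fin.val_last]; omega
    rw [hlast] at hkt; linarith
  refine ⟨⟨(s.max' hne : ℕ), hkn⟩, ⟨?_, ?_⟩⟩
  · have : (⟨(s.max' hne : ℕ), hkn⟩ : Fin n).castSucc = s.max' hne := by
      apply Fin.ext; simp
    rw [this]; exact hkt
  · by_contra h
    push_neg at h
    have hmem : (⟨(s.max' hne : ℕ), hkn⟩ : Fin n).succ ∈ s := by
      simp only [hs, Finset.mem_filter, Finset.mem_univ, true_and]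
      exact h
    have hle := s.le_max' _ hmem
    rw [Fin.le_def] at hle
    simp only [Fin.val_succ] at hle
    omega

lemma part_union {n : ℕ} (x : Fin (n+1) → ℝ) (hmono : StrictMono x)
    (hx0 : x 0 = 0) (hx1 : x (Fin.last n) = 1) :
    Ico (0:ℝ) 1 = ⋃ j : Fin n, Ico (x j.castSucc) (x j.succ) := by
  ext t
  simp only [Set.mem_iUnion]
  constructor
  · intro ht
    exact part_exists x hmono t (by rw [hx0]; exact ht.1) (by rw [hx1]; exact ht.2)
  · rintro ⟨j, hj⟩
    refine ⟨?_, ?_⟩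
    · calc (0:ℝ) = x 0 := hx0.symm
        _ ≤ x j.castSucc := hmono.monotone (Fin.zero_le _)
        _ ≤ t := hj.1
    · calc t < x j.succ := hj.2
        _ ≤ x (Fin.last n) := hmono.monotone (Fin.le_last _)
        _ = 1 := hx1

lemma incr_bound (p : ℝ) (hp1 : 1 < p) (f f' : ℝ → ℝ)
    (hint : IntegrableOn f' (Icc 0 1))
    (hFTC : ∀ t ∈ Icc (0:ℝ) 1, f t = f 0 + ∫ u in (0:ℝ)..t, f' u)
    (a b c d : ℝ) (hab : Icc a b ⊆ Icc 0 1) (hac : a ≤ c) (hcd : c ≤ d) (hdb : d ≤ b)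
    (H : ℝ) (hH : b - a ≤ H) :
    (‖f d - f c‖₊ : ℝ≥0∞) ≤
      eLpNorm f' (ENNReal.ofReal p) (volume.restrict (Icc a b)) * ENNReal.ofReal H ^ (1 - 1/p) := by
  have hc : c ∈ Icc (0:ℝ) 1 := hab ⟨hac, hcd.trans hdb⟩
  have hd : d ∈ Icc (0:ℝ) 1 := hab ⟨hac.trans hcd, hdb⟩
  have hii : ∀ u v : ℝ, 0 ≤ u → u ≤ v → v ≤ 1 → IntervalIntegrable f' volume u v := by
    intro u v hu huv hv1
    exact (hint.mono_set (by rw [Set.uIcc_of_le huv]; exact Set.Icc_subset_Icc hu hv1)).intervalIntegrable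
  have hfd : f d - f c = ∫ u in Ioc c d, f' u := by
    rw [hFTC d hd, hFTC c hc, add_sub_add_left_eq_sub,
      ← intervalIntegral.integral_add_adjacent_intervals (hii 0 c le_rfl hc.1 hc.2)
        (hii c d hc.1 hcd hd.2), add_sub_cancel_left, intervalIntegral.integral_of_le hcd]
  have h1 : (‖f d - f c‖₊ : ℝ≥0∞) ≤ eLpNorm f' 1 (volume.restrict (Ioc c d)) := by
    rw [hfd, eLpNorm_one_eq_lintegral_enorm]
    exact enorm_integral_le_lintegral_enorm _
  have hasm : AEStronglyMeasurable f' (volume.restrict (Ioc c d)) := by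
    have : IntegrableOn f' (Ioc c d) := hint.mono_set
      (fun t ht => ⟨hc.1.trans ht.1.le, ht.2.trans hd.2⟩)
    exact this.aestronglyMeasurable
  have hp0 : (0:ℝ) ≤ p := by linarith
  have h2 : eLpNorm f' 1 (volume.restrict (Ioc c d)) ≤
      eLpNorm f' (ENNReal.ofReal p) (volume.restrict (Ioc c d)) *
        (volume.restrict (Ioc c d)) Set.univ ^ (1/(1:ℝ≥0∞).toReal - 1/(ENNReal.ofReal p).toReal) := by
    apply eLpNorm_le_eLpNorm_mul_rpow_measure_univ _ hasm
    rw [← ENNReal.ofReal_one]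
    exact ENNReal.ofReal_le_ofReal hp1.le
  have hexp : (1/(1:ℝ≥0∞).toReal - 1/(ENNReal.ofReal p).toReal) = 1 - 1/p := by
    rw [ENNReal.toReal_ofReal hp0]; norm_num
  have hmeas : (volume.restrict (Ioc c d)) Set.univ = ENNReal.ofReal (d - c) := by
    rw [Measure.restrict_apply_univ, Real.volume_Ioc]
  have h3 : eLpNorm f' (ENNReal.ofReal p) (volume.restrict (Ioc c d)) ≤
      eLpNorm f' (ENNReal.ofReal p) (volume.restrict (Icc a b)) :=
    eLpNorm_mono_measure _ (Measure.restrict_mono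
      (Set.Ioc_subset_Icc_self.trans (Set.Icc_subset_Icc hac hdb)) le_rfl)
  calc (‖f d - f c‖₊ : ℝ≥0∞) ≤ _ := h1
    _ ≤ _ := h2
    _ = eLpNorm f' (ENNReal.ofReal p) (volume.restrict (Ioc c d)) *
        ENNReal.ofReal (d - c) ^ (1 - 1/p) := by rw [hexp, hmeas]
    _ ≤ eLpNorm f' (ENNReal.ofReal p) (volume.restrict (Icc a b)) *
        ENNReal.ofReal H ^ (1 - 1/p) := by
      apply mul_le_mul' h3
      apply ENNReal.rpow_le_rpow _ (by rw [sub_nonneg, div_le_one (by linarith)]; linarith)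
      exact ENNReal.ofReal_le_ofReal (by linarith)

lemma interp_pt (p : ℝ) (hp1 : 1 < p) (f f' : ℝ → ℝ)
    (hint : IntegrableOn f' (Icc 0 1))
    (hFTC : ∀ t ∈ Icc (0:ℝ) 1, f t = f 0 + ∫ u in (0:ℝ)..t, f' u)
    (a b : ℝ) (hab : a < b) (hsub : Icc a b ⊆ Icc 0 1)
    (H : ℝ) (hH : b - a ≤ H) (t : ℝ) (ht : t ∈ Icc a b) :
    (‖f t - (f a + (f b - f a)/(b-a)*(t-a))‖₊ : ℝ≥0∞) ≤
      eLpNorm f' (ENNReal.ofReal p) (volume.restrict (Icc a b)) * ENNReal.ofReal H ^ (1 - 1/p) := by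
  set θ : ℝ := (t - a)/(b - a) with hθ
  have hba : (0:ℝ) < b - a := by linarith [hab]
  have hθ0 : 0 ≤ θ := div_nonneg (by linarith [ht.1]) hba.le
  have hθ1 : θ ≤ 1 := by
    rw [hθ, div_le_one hba]; linarith [ht.2]
  have hid : f t - (f a + (f b - f a)/(b-a)*(t-a)) =
      (1-θ)*(f t - f a) + θ*(f t - f b) := by
    rw [hθ]; field_simp; ring
  rw [hid]
  calc (‖(1-θ)*(f t - f a) + θ*(f t - f b)‖₊ : ℝ≥0∞)
      ≤ (‖(1-θ)*(f t - f a)‖₊ : ℝ≥0∞) + ‖θ*(f t - f b)‖₊ := by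
        exact_mod_cast nnnorm_add_le _ _
    _ = ENNReal.ofReal (1-θ) * ‖f t - f a‖₊ + ENNReal.ofReal θ * ‖f t - f b‖₊ := by
        rw [nnnorm_mul, nnnorm_mul, ENNReal.coe_mul, ENNReal.coe_mul,
          ← enorm_eq_nnnorm (1-θ), ← enorm_eq_nnnorm θ, Real.enorm_eq_ofReal_abs (1-θ), Real.enorm_eq_ofReal_abs θ,
          abs_of_nonneg (by linarith : (0:ℝ) ≤ 1-θ), abs_of_nonneg hθ0]
    _ ≤ ENNReal.ofReal (1-θ) * (eLpNorm f' (ENNReal.ofReal p) (volume.restrict (Icc a b)) * ENNReal.ofReal H ^ (1 - 1/p))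
        + ENNReal.ofReal θ * (eLpNorm f' (ENNReal.ofReal p) (volume.restrict (Icc a b)) * ENNReal.ofReal H ^ (1 - 1/p)) := by
        gcongr
        · exact incr_bound p hp1 f f' hint hFTC a b a t hsub le_rfl ht.1 ht.2 H hH
        · rw [show f t - f b = -(f b - f t) by ring, nnnorm_neg]
          exact incr_bound p hp1 f f' hint hFTC a b t b hsub ht.1 ht.2 le_rfl H hH
    _ = (ENNReal.ofReal (1-θ) + ENNReal.ofReal θ) *
        (eLpNorm f' (ENNReal.ofReal p) (volume.restrict (Icc a b)) * ENNReal.ofReal H ^ (1 - 1/p)) := by ring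
    _ = _ := by
        rw [← ENNReal.ofReal_add (by linarith) hθ0]
        norm_num

lemma lin_int (a b C D : ℝ) (hab : a < b) :
    ∫ t in Ico a b, (C + (D - C)/(b-a)*(t-a)) = (b-a)*(C+D)/2 := by
  have hba : (0:ℝ) < b - a := by linarith
  rw [MeasureTheory.integral_Ico_eq_integral_Ioo, ← MeasureTheory.integral_Ioc_eq_integral_Ioo,
    ← intervalIntegral.integral_of_le hab.le]
  have h1 : IntervalIntegrable (fun _ : ℝ => C) volume a b := intervalIntegrable_const
  have h2 : IntervalIntegrable (fun t : ℝ => (D - C)/(b-a)*(t-a)) volume a b := by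
    apply Continuous.intervalIntegrable; continuity
  rw [intervalIntegral.integral_add h1 h2, intervalIntegral.integral_const,
    intervalIntegral.integral_const_mul]
  have h3 : ∫ t in a..b, (t - a) = (b-a)^2/2 := by
    have := intervalIntegral.integral_comp_sub_right (a := a) (b := b) (fun s => s) a
    rw [this, integral_id]
    ring
  rw [h3, smul_eq_mul]
  field_simp
  ring

lemma Vint (a b c d : ℝ) (hab : a < b) (H : ℝ) (hH : b - a ≤ H) :
    ∫⁻ t in Ico a b, (‖c + (d-c)/(b-a)*(t-a)‖₊ : ℝ≥0∞) ^ (2:ℝ)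
      ≤ ENNReal.ofReal (H*(c^2 + d^2)/2) := by
  have hba : (0:ℝ) < b - a := by linarith
  set g : ℝ → ℝ := fun t => c^2 + (d^2 - c^2)/(b-a)*(t-a) with hg
  have hgc : Continuous g := by rw [hg]; continuity
  have hpt : ∀ t ∈ Ico a b, (‖c + (d-c)/(b-a)*(t-a)‖₊ : ℝ≥0∞) ^ (2:ℝ) ≤ ENNReal.ofReal (g t) := by
    intro t ht
    rw [sq_enorm_eq]
    apply ENNReal.ofReal_le_ofReal
    set θ : ℝ := (t-a)/(b-a) with hθ
    have hθ0 : 0 ≤ θ := div_nonneg (by linarith [ht.1]) hba.le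
    have hθ1 : θ ≤ 1 := by rw [hθ, div_le_one hba]; linarith [ht.2]
    have e1 : c + (d-c)/(b-a)*(t-a) = (1-θ)*c + θ*d := by rw [hθ]; field_simp; ring
    have e2 : g t = (1-θ)*c^2 + θ*d^2 := by rw [hg, hθ]; field_simp; ring
    rw [e1, e2]
    exact conv_sq c d θ hθ0 hθ1
  calc ∫⁻ t in Ico a b, (‖c + (d-c)/(b-a)*(t-a)‖₊ : ℝ≥0∞) ^ (2:ℝ)
      ≤ ∫⁻ t in Ico a b, ENNReal.ofReal (g t) := by
        apply setLIntegral_mono (by measurability) hpt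
    _ = ENNReal.ofReal (∫ t in Ico a b, g t) := by
        rw [ofReal_integral_eq_lintegral_ofReal]
        · exact (hgc.integrableOn_Icc).mono_set Set.Ico_subset_Icc_self
        · rw [Filter.EventuallyLE, ae_restrict_iff' measurableSet_Ico]
          apply Filter.Eventually.of_forall
          intro t ht
          have hθ0 : 0 ≤ (t-a)/(b-a) := div_nonneg (by linarith [ht.1]) hba.le
          have hθ1 : (t-a)/(b-a) ≤ 1 := by rw [div_le_one hba]; linarith [ht.2]
          have e2 : g t = (1-(t-a)/(b-a))*c^2 + ((t-a)/(b-a))*d^2 := by rw [hg]; field_simp; ring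
          rw [Pi.zero_apply, e2]
          have := sq_nonneg c; have := sq_nonneg d
          nlinarith
    _ = ENNReal.ofReal ((b-a)*(c^2+d^2)/2) := by rw [lin_int a b (c^2) (d^2) hab]
    _ ≤ _ := by
        apply ENNReal.ofReal_le_ofReal
        nlinarith [sq_nonneg c, sq_nonneg d]

end helpers

lemma ofReal_sq (r : ℝ) (hr : 0 ≤ r) :
    ENNReal.ofReal (r^2) = ENNReal.ofReal r ^ (2:ℝ) := by
  rw [ENNReal.ofReal_rpow_of_nonneg hr (by norm_num : (0:ℝ) ≤ 2),
    show r ^ (2:ℝ) = r^(2:ℕ) from Real.rpow_natCast r 2]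

/-- Weighted euclidean norm on `ℝ^m` (here `m = n+1` data sites):
`‖v‖ = ( m⁻¹ ∑ v_j² )^{1/2}`. -/
noncomputable def wNorm {m : ℕ} (v : Fin m → ℝ) : ℝ :=
  Real.sqrt ((∑ j, v j ^ 2) / m)

/-- Bound for the Chebyshev radius of the inflated set: for every `ε > 0` with
`K(w,ε) ≠ ∅`, every `f ∈ K(w,ε)` satisfies
`‖f − S_w‖_{L₂[0,1]} ≤ h(x)^s + ε √(m h(x))`, and consequently
`R(K(w,ε)) ≤ h(x)^s + ε √(m h(x))`, where `m = n+1` is the number of data sites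
and `s := 3/2 − 1/p`. -/
theorem stmt_18
    (p : ℝ) (hp1 : 1 < p) (hp2 : p ≤ 2)
    {n : ℕ} (hn : 0 < n) (x : Fin (n + 1) → ℝ)
    (hmono : StrictMono x) (hx0 : x 0 = 0) (hx1 : x (Fin.last n) = 1)
    (hX : ℝ)
    (hhX : IsGreatest (Set.range fun j : Fin n => x j.succ - x j.castSucc) hX)
    (w : Fin (n + 1) → ℝ)
    (Sw : ℝ → ℝ)
    (hSw : ∀ j : Fin n, ∀ t ∈ Icc (x j.castSucc) (x j.succ),
      Sw t = w j.castSucc +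
        (w j.succ - w j.castSucc) / (x j.succ - x j.castSucc) * (t - x j.castSucc)) :
    ∀ ε : ℝ, 0 < ε →
      ({f ∈ modelK p | wNorm (fun j => f (x j) - w j) ≤ ε}).Nonempty →
      (∀ f ∈ {f ∈ modelK p | wNorm (fun j => f (x j) - w j) ≤ ε},
        eLpNorm (fun t => f t - Sw t) 2 (volume.restrict (Icc 0 1)) ≤
          ENNReal.ofReal (hX ^ (3 / 2 - 1 / p) +
            ε * Real.sqrt (((n : ℝ) + 1) * hX))) ∧
      L2cheb {f ∈ modelK p | wNorm (fun j => f (x j) - w j) ≤ ε} ≤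
        ENNReal.ofReal (hX ^ (3 / 2 - 1 / p) +
          ε * Real.sqrt (((n : ℝ) + 1) * hX)) := by
  intro ε hε _hne
  set μ := volume.restrict (Icc (0:ℝ) 1) with hμ
  have habj : ∀ j : Fin n, x j.castSucc < x j.succ := fun j => hmono (Fin.castSucc_lt_succ (i := j))
  have hsubj : ∀ j : Fin n, Icc (x j.castSucc) (x j.succ) ⊆ Icc (0:ℝ) 1 := by
    intro j t ht
    constructor
    · calc (0:ℝ) = x 0 := hx0.symm
        _ ≤ x j.castSucc := hmono.monotone (Fin.zero_le _)
        _ ≤ t := ht.1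
    · calc t ≤ x j.succ := ht.2
        _ ≤ x (Fin.last n) := hmono.monotone (Fin.le_last _)
        _ = 1 := hx1
  have hXj : ∀ j : Fin n, x j.succ - x j.castSucc ≤ hX := fun j => hhX.2 (Set.mem_range_self j)
  have hX0 : 0 < hX := by
    obtain ⟨j0, hj0⟩ := hhX.1
    have h1 : x j0.succ - x j0.castSucc = hX := hj0
    linarith [habj j0]
  have hAdisj := part_disj x hmono
  have hAmeas : ∀ j : Fin n, MeasurableSet (Ico (x j.castSucc) (x j.succ)) :=
    fun j => measurableSet_Ico
  have hAunion : Ico (0:ℝ) 1 = ⋃ j : Fin n, Ico (x j.castSucc) (x j.succ) :=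
    part_union x hmono hx0 hx1
  have key : ∀ f ∈ {f ∈ modelK p | wNorm (fun j => f (x j) - w j) ≤ ε},
      eLpNorm (fun t => f t - Sw t) 2 μ ≤
        ENNReal.ofReal (hX ^ (3 / 2 - 1 / p) + ε * Real.sqrt (((n : ℝ) + 1) * hX)) := by
    rintro f ⟨⟨f', hint, hFTC, hnorm⟩, hwv⟩
    have hp0 : (0:ℝ) < p := by linarith
    set P := ENNReal.ofReal p with hP
    have hP0 : P ≠ 0 := by simp [hP, ENNReal.ofReal_eq_zero]; linarith
    have hPtop : P ≠ ⊤ := ENNReal.ofReal_ne_top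
    have hPt : P.toReal = p := ENNReal.toReal_ofReal hp0.le
    set Laff : Fin n → ℝ → ℝ := fun j t =>
      f (x j.castSucc) + (f (x j.succ) - f (x j.castSucc))/(x j.succ - x j.castSucc) * (t - x j.castSucc) with hLaff
    set Waff : Fin n → ℝ → ℝ := fun j t =>
      w j.castSucc + (w j.succ - w j.castSucc)/(x j.succ - x j.castSucc) * (t - x j.castSucc) with hWaff
    set Vaff : Fin n → ℝ → ℝ := fun j t => Laff j t - Waff j t with hVaff
    set u : ℝ → ℝ := fun t => f t - ∑ i, (Ico (x i.castSucc) (x i.succ)).indicator (Laff i) t with hu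
    set V : ℝ → ℝ := fun t => ∑ i, (Ico (x i.castSucc) (x i.succ)).indicator (Vaff i) t with hV
    have hVmeas : Measurable V := by
      apply Finset.measurable_sum
      intro i _
      exact Measurable.indicator (by fun_prop) (hAmeas i)
    have hLmeas : Measurable (fun t => ∑ i, (Ico (x i.castSucc) (x i.succ)).indicator (Laff i) t) := by
      apply Finset.measurable_sum
      intro i _
      exact Measurable.indicator (by fun_prop) (hAmeas i)
    have hfasm : AEStronglyMeasurable f μ := by
      have hcont : ContinuousOn (fun t => f 0 + ∫ s in Ioc (0:ℝ) t, f' s) (Icc 0 1) :=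
        continuousOn_const.add (intervalIntegral.continuousOn_primitive hint)
      apply (hcont.aestronglyMeasurable measurableSet_Icc).congr
      rw [Filter.EventuallyEq, ae_restrict_iff' measurableSet_Icc]
      apply Filter.Eventually.of_forall
      intro t ht
      rw [hFTC t ht, intervalIntegral.integral_of_le ht.1]
    have huasm : AEStronglyMeasurable u μ := hfasm.sub hLmeas.aestronglyMeasurable
    have hVasm : AEStronglyMeasurable V μ := hVmeas.aestronglyMeasurable
    have hae : (fun t => f t - Sw t) =ᵐ[μ] (u + V) := by
      rw [Filter.EventuallyEq, hμ, ae_restrict_iff' measurableSet_Icc]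
      have h1 : ∀ᵐ t : ℝ, t ≠ 1 := by
        rw [ae_iff]
        simpa using (measure_singleton (1:ℝ))
      filter_upwards [h1] with t ht1 htIcc
      have htIco : t ∈ Ico (0:ℝ) 1 := ⟨htIcc.1, lt_of_le_of_ne htIcc.2 ht1⟩
      obtain ⟨j, hj⟩ : ∃ j : Fin n, t ∈ Ico (x j.castSucc) (x j.succ) := by
        have := hAunion ▸ htIco
        simpa using this
      have hSwt : Sw t = Waff j t := hSw j t (Set.Ico_subset_Icc_self hj)
      have hsumL : (∑ i, (Ico (x i.castSucc) (x i.succ)).indicator (Laff i) t) = Laff j t :=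
        sum_ind _ hAdisj Laff j t hj
      have hsumV : (∑ i, (Ico (x i.castSucc) (x i.succ)).indicator (Vaff i) t) = Vaff j t :=
        sum_ind _ hAdisj Vaff j t hj
      show f t - Sw t = u t + V t
      rw [hSwt, hu, hV]
      simp only
      rw [hsumL, hsumV, hVaff]
      ring
    have htri : eLpNorm (fun t => f t - Sw t) 2 μ ≤ eLpNorm u 2 μ + eLpNorm V 2 μ := by
      rw [eLpNorm_congr_ae hae]
      exact eLpNorm_add_le huasm hVasm one_le_two
    -- ==== bound for u ====
    set E : Fin n → ℝ≥0∞ :=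
      fun j => eLpNorm f' P (volume.restrict (Icc (x j.castSucc) (x j.succ))) with hE
    set Hq : ℝ≥0∞ := ENNReal.ofReal hX ^ (1 - 1/p) with hHq
    have hE1 : ∀ j, E j ≤ 1 := fun j =>
      (eLpNorm_mono_measure _ (Measure.restrict_mono (hsubj j) le_rfl)).trans hnorm
    have hild : ∀ S : Set ℝ,
        eLpNorm f' P (volume.restrict S) ^ p = ∫⁻ t in S, (‖f' t‖₊ : ℝ≥0∞) ^ p := by
      intro S
      rw [eLpNorm_eq_lintegral_rpow_enorm_toReal hP0 hPtop]; simp only [enorm_eq_nnnorm]; rw [hPt, ← ENNReal.rpow_mul, one_div,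
        inv_mul_cancel₀ (ne_of_gt hp0), ENNReal.rpow_one]
    have hsum_p : ∑ j : Fin n, E j ^ p ≤ 1 := by
      have h1 : ∀ j : Fin n,
          E j ^ p = ∫⁻ t in Ico (x j.castSucc) (x j.succ), (‖f' t‖₊ : ℝ≥0∞) ^ p := by
        intro j
        simp only [hE]
        rw [hild, ← setLIntegral_congr Ico_ae_eq_Icc]
      calc ∑ j : Fin n, E j ^ p
          = ∫⁻ t in Ico (0:ℝ) 1, (‖f' t‖₊ : ℝ≥0∞) ^ p := by
            rw [hAunion, lintegral_iUnion hAmeas hAdisj, tsum_fintype]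
            exact Finset.sum_congr rfl fun j _ => h1 j
        _ ≤ ∫⁻ t in Icc (0:ℝ) 1, (‖f' t‖₊ : ℝ≥0∞) ^ p := lintegral_mono_set Ico_subset_Icc_self
        _ = eLpNorm f' P (volume.restrict (Icc (0:ℝ) 1)) ^ p := (hild _).symm
        _ ≤ 1 := by
            calc eLpNorm f' P (volume.restrict (Icc (0:ℝ) 1)) ^ p ≤ 1 ^ p :=
              ENNReal.rpow_le_rpow hnorm hp0.le
            _ = 1 := ENNReal.one_rpow p
    have hu_bound : eLpNorm u 2 μ ≤ ENNReal.ofReal (hX ^ (3/2 - 1/p)) := by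
      have h2ne : (2:ℝ≥0∞) ≠ 0 := by norm_num
      have h2top : (2:ℝ≥0∞) ≠ ⊤ := by norm_num
      rw [eLpNorm_eq_lintegral_rpow_enorm_toReal h2ne h2top]
      simp only [ENNReal.toReal_ofNat]
      have hstep : ∀ j : Fin n,
          (∫⁻ t in Ico (x j.castSucc) (x j.succ), (‖u t‖₊:ℝ≥0∞) ^ (2:ℝ))
            ≤ ENNReal.ofReal hX * (E j * Hq) ^ (2:ℝ) := by
        intro j
        have hcong : (∫⁻ t in Ico (x j.castSucc) (x j.succ), (‖u t‖₊:ℝ≥0∞) ^ (2:ℝ))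
            = ∫⁻ t in Ico (x j.castSucc) (x j.succ), (‖f t - Laff j t‖₊:ℝ≥0∞) ^ (2:ℝ) := by
          apply setLIntegral_congr_fun measurableSet_Ico
          intro t ht
          have hsum : (∑ i, (Ico (x i.castSucc) (x i.succ)).indicator (Laff i) t) = Laff j t :=
            sum_ind _ hAdisj Laff j t ht
          simp only [hu]
          rw [hsum]
        rw [hcong]
        calc (∫⁻ t in Ico (x j.castSucc) (x j.succ), (‖f t - Laff j t‖₊:ℝ≥0∞) ^ (2:ℝ))
            ≤ ∫⁻ _t in Ico (x j.castSucc) (x j.succ), (E j * Hq) ^ (2:ℝ) := by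
              apply setLIntegral_mono measurable_const
              intro t ht
              apply ENNReal.rpow_le_rpow _ (by norm_num : (0:ℝ) ≤ 2)
              have hip := interp_pt p hp1 f f' hint hFTC (x j.castSucc) (x j.succ) (habj j)
                (hsubj j) hX (hXj j) t (Set.Ico_subset_Icc_self ht)
              simpa [hE, hHq, hLaff, hP] using hip
          _ = (E j * Hq) ^ (2:ℝ) * volume (Ico (x j.castSucc) (x j.succ)) :=
              setLIntegral_const _ _
          _ ≤ (E j * Hq) ^ (2:ℝ) * ENNReal.ofReal hX := by
              gcongr
              rw [Real.volume_Ico]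
              exact ENNReal.ofReal_le_ofReal (hXj j)
          _ = ENNReal.ofReal hX * (E j * Hq) ^ (2:ℝ) := mul_comm _ _
      have hlint : (∫⁻ t, (‖u t‖₊:ℝ≥0∞) ^ (2:ℝ) ∂μ) ≤ ENNReal.ofReal hX ^ ((3:ℝ) - 2/p) := by
        calc (∫⁻ t, (‖u t‖₊:ℝ≥0∞) ^ (2:ℝ) ∂μ)
            = ∑ j : Fin n, ∫⁻ t in Ico (x j.castSucc) (x j.succ), (‖u t‖₊:ℝ≥0∞) ^ (2:ℝ) := by
              rw [hμ, ← setLIntegral_congr Ico_ae_eq_Icc, hAunion,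
                lintegral_iUnion hAmeas hAdisj, tsum_fintype]
          _ ≤ ∑ j : Fin n, ENNReal.ofReal hX * (E j * Hq) ^ (2:ℝ) :=
              Finset.sum_le_sum fun j _ => hstep j
          _ = ENNReal.ofReal hX * Hq ^ (2:ℝ) * ∑ j : Fin n, E j ^ (2:ℝ) := by
              rw [Finset.mul_sum]
              refine Finset.sum_congr rfl fun j _ => ?_
              rw [ENNReal.mul_rpow_of_nonneg _ _ (by norm_num : (0:ℝ) ≤ 2)]
              ring
          _ ≤ ENNReal.ofReal hX * Hq ^ (2:ℝ) * ∑ j : Fin n, E j ^ p :=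
              mul_le_mul_right (Finset.sum_le_sum fun j _ =>
                ENNReal.rpow_le_rpow_of_exponent_ge (hE1 j) hp2) _
          _ ≤ ENNReal.ofReal hX * Hq ^ (2:ℝ) * 1 := mul_le_mul_right hsum_p _
          _ = ENNReal.ofReal hX ^ ((3:ℝ) - 2/p) := by
              have hne0 : ENNReal.ofReal hX ≠ 0 := by
                simp only [ne_eq, ENNReal.ofReal_eq_zero, not_le]; linarith
              rw [mul_one, hHq, ← ENNReal.rpow_mul]
              rw [show ENNReal.ofReal hX * ENNReal.ofReal hX ^ ((1 - 1/p)*2) =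
                  ENNReal.ofReal hX ^ ((1:ℝ) + (1 - 1/p)*2) by
                rw [ENNReal.rpow_add _ _ hne0 ENNReal.ofReal_ne_top, ENNReal.rpow_one]]
              congr 1
              ring
      calc (∫⁻ t, (‖u t‖₊:ℝ≥0∞) ^ (2:ℝ) ∂μ) ^ (1/(2:ℝ))
          ≤ (ENNReal.ofReal hX ^ ((3:ℝ) - 2/p)) ^ (1/(2:ℝ)) :=
            ENNReal.rpow_le_rpow hlint (by norm_num)
        _ = ENNReal.ofReal hX ^ (((3:ℝ) - 2/p) * (1/2)) := (ENNReal.rpow_mul _ _ _).symm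
        _ = ENNReal.ofReal hX ^ ((3:ℝ)/2 - 1/p) := by congr 1; ring
        _ = ENNReal.ofReal (hX ^ ((3:ℝ)/2 - 1/p)) := ENNReal.ofReal_rpow_of_pos hX0
        _ = ENNReal.ofReal (hX ^ (3/2 - 1/p)) := by norm_num
    -- ==== bound for V ====
    have hv_sum : (∑ i : Fin (n+1), (f (x i) - w i)^2) ≤ ((n:ℝ) + 1) * ε^2 := by
      have hm : (0:ℝ) < ((n+1 : ℕ):ℝ) := by positivity
      have hnn : (0:ℝ) ≤ (∑ j : Fin (n+1), (f (x j) - w j)^2) / ((n+1:ℕ):ℝ) :=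
        div_nonneg (Finset.sum_nonneg fun j _ => sq_nonneg _) hm.le
      simp only [wNorm] at hwv
      have h2 : (∑ j : Fin (n+1), (f (x j) - w j)^2) / ((n+1:ℕ):ℝ) ≤ ε^2 := by
        nlinarith [Real.sq_sqrt hnn,
          Real.sqrt_nonneg ((∑ j : Fin (n+1), (f (x j) - w j)^2) / ((n+1:ℕ):ℝ)), hwv]
      rw [div_le_iff₀ hm] at h2
      push_cast at h2 ⊢
      linarith
    have hVstep : ∀ j : Fin n,
        (∫⁻ t in Ico (x j.castSucc) (x j.succ), (‖V t‖₊:ℝ≥0∞) ^ (2:ℝ))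
          ≤ ENNReal.ofReal (hX * ((f (x j.castSucc) - w j.castSucc)^2
              + (f (x j.succ) - w j.succ)^2)/2) := by
      intro j
      have hba := habj j
      have hnn : ∀ a b : ℝ, a = b → (‖a‖₊:ℝ≥0∞) ^ (2:ℝ) = (‖b‖₊:ℝ≥0∞) ^ (2:ℝ) :=
        fun a b h => by rw [h]
      have hcong : (∫⁻ t in Ico (x j.castSucc) (x j.succ), (‖V t‖₊:ℝ≥0∞) ^ (2:ℝ))
          = ∫⁻ t in Ico (x j.castSucc) (x j.succ),
              (‖(f (x j.castSucc) - w j.castSucc) +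
                ((f (x j.succ) - w j.succ) - (f (x j.castSucc) - w j.castSucc)) /
                  (x j.succ - x j.castSucc) * (t - x j.castSucc)‖₊:ℝ≥0∞) ^ (2:ℝ) := by
        apply setLIntegral_congr_fun measurableSet_Ico
        intro t ht
        have hsum : (∑ i, (Ico (x i.castSucc) (x i.succ)).indicator (Vaff i) t) = Vaff j t :=
          sum_ind _ hAdisj Vaff j t ht
        simp only [hV]
        rw [hsum]
        simp only [hVaff, hLaff, hWaff]
        apply hnn
        have hne : x j.succ - x j.castSucc ≠ 0 := ne_of_gt (by linarith)
        field_simp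
        ring
      rw [hcong]
      exact Vint (x j.castSucc) (x j.succ) (f (x j.castSucc) - w j.castSucc)
        (f (x j.succ) - w j.succ) hba hX (hXj j)
    have hV_bound : eLpNorm V 2 μ ≤ ENNReal.ofReal (ε * Real.sqrt (((n:ℝ)+1) * hX)) := by
      have h2ne : (2:ℝ≥0∞) ≠ 0 := by norm_num
      have h2top : (2:ℝ≥0∞) ≠ ⊤ := by norm_num
      rw [eLpNorm_eq_lintegral_rpow_enorm_toReal h2ne h2top]
      simp only [ENNReal.toReal_ofNat]
      have hreal : (∑ j : Fin n, hX * ((f (x j.castSucc) - w j.castSucc)^2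
            + (f (x j.succ) - w j.succ)^2)/2)
          ≤ hX * (((n:ℝ)+1) * ε^2) := by
        have hcs : (∑ j : Fin n, (f (x j.castSucc) - w j.castSucc)^2)
            ≤ ∑ i : Fin (n+1), (f (x i) - w i)^2 := by
          rw [Fin.sum_univ_castSucc (f := fun i : Fin (n+1) => (f (x i) - w i)^2)]
          have := sq_nonneg (f (x (Fin.last n)) - w (Fin.last n))
          linarith
        have hss : (∑ j : Fin n, (f (x j.succ) - w j.succ)^2)
            ≤ ∑ i : Fin (n+1), (f (x i) - w i)^2 := by
          rw [Fin.sum_univ_succ (f := fun i : Fin (n+1) => (f (x i) - w i)^2)]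
          have := sq_nonneg (f (x 0) - w 0)
          linarith
        have hexp : (∑ j : Fin n, hX * ((f (x j.castSucc) - w j.castSucc)^2
              + (f (x j.succ) - w j.succ)^2)/2)
            = hX/2 * ((∑ j : Fin n, (f (x j.castSucc) - w j.castSucc)^2)
              + ∑ j : Fin n, (f (x j.succ) - w j.succ)^2) := by
          rw [← Finset.sum_add_distrib, Finset.mul_sum]
          exact Finset.sum_congr rfl fun j _ => by ring
        rw [hexp]
        have hh1 : hX/2 * ((∑ j : Fin n, (f (x j.castSucc) - w j.castSucc)^2)
              + ∑ j : Fin n, (f (x j.succ) - w j.succ)^2)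
            ≤ hX/2 * ((∑ i : Fin (n+1), (f (x i) - w i)^2)
              + ∑ i : Fin (n+1), (f (x i) - w i)^2) :=
          mul_le_mul_of_nonneg_left (add_le_add hcs hss) (by linarith)
        have hh2 : hX * (∑ i : Fin (n+1), (f (x i) - w i)^2) ≤ hX * (((n:ℝ)+1) * ε^2) :=
          mul_le_mul_of_nonneg_left hv_sum hX0.le
        nlinarith [hh1, hh2]
      have hlintV : (∫⁻ t, (‖V t‖₊:ℝ≥0∞) ^ (2:ℝ) ∂μ)
          ≤ ENNReal.ofReal ((ε * Real.sqrt (((n:ℝ)+1) * hX))^2) := by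
        calc (∫⁻ t, (‖V t‖₊:ℝ≥0∞) ^ (2:ℝ) ∂μ)
            = ∑ j : Fin n, ∫⁻ t in Ico (x j.castSucc) (x j.succ), (‖V t‖₊:ℝ≥0∞) ^ (2:ℝ) := by
              rw [hμ, ← setLIntegral_congr Ico_ae_eq_Icc, hAunion,
                lintegral_iUnion hAmeas hAdisj, tsum_fintype]
          _ ≤ ∑ j : Fin n, ENNReal.ofReal (hX * ((f (x j.castSucc) - w j.castSucc)^2
                + (f (x j.succ) - w j.succ)^2)/2) :=
              Finset.sum_le_sum fun j _ => hVstep j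
          _ = ENNReal.ofReal (∑ j : Fin n, hX * ((f (x j.castSucc) - w j.castSucc)^2
                + (f (x j.succ) - w j.succ)^2)/2) := by
              rw [ENNReal.ofReal_sum_of_nonneg]
              intro j _
              have h1 := sq_nonneg (f (x j.castSucc) - w j.castSucc)
              have h2 := sq_nonneg (f (x j.succ) - w j.succ)
              apply div_nonneg _ (by norm_num : (0:ℝ) ≤ 2)
              apply mul_nonneg hX0.le
              linarith
          _ ≤ ENNReal.ofReal (hX * (((n:ℝ)+1) * ε^2)) := ENNReal.ofReal_le_ofReal hreal
          _ = ENNReal.ofReal ((ε * Real.sqrt (((n:ℝ)+1) * hX))^2) := by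
              congr 1
              rw [mul_pow, Real.sq_sqrt (by positivity : (0:ℝ) ≤ ((n:ℝ)+1) * hX)]
              ring
      calc (∫⁻ t, (‖V t‖₊:ℝ≥0∞) ^ (2:ℝ) ∂μ) ^ (1/(2:ℝ))
          ≤ (ENNReal.ofReal ((ε * Real.sqrt (((n:ℝ)+1) * hX))^2)) ^ (1/(2:ℝ)) :=
            ENNReal.rpow_le_rpow hlintV (by norm_num)
        _ = ENNReal.ofReal (ε * Real.sqrt (((n:ℝ)+1) * hX)) := by
            rw [ofReal_sq _ (mul_nonneg hε.le (Real.sqrt_nonneg _)), ← ENNReal.rpow_mul]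
            norm_num
    calc eLpNorm (fun t => f t - Sw t) 2 μ ≤ eLpNorm u 2 μ + eLpNorm V 2 μ := htri
      _ ≤ ENNReal.ofReal (hX ^ (3/2 - 1/p)) + ENNReal.ofReal (ε * Real.sqrt (((n:ℝ)+1) * hX)) :=
          add_le_add hu_bound hV_bound
      _ = _ := (ENNReal.ofReal_add (Real.rpow_nonneg hX0.le _)
          (mul_nonneg hε.le (Real.sqrt_nonneg _))).symm
  refine ⟨fun f hf => key f hf, ?_⟩
  rw [L2cheb]
  exact iInf_le_of_le Sw (iSup₂_le fun f hf => key f hf)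
end
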